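/- Let K : V → ℝ be Fréchet differentiable, let u ∈ V, and let g ∈ ℝ^M be such that the Fréchet derivative of K ∘ I at σ(u) is the linear map c ↦ gᵀ M̃ c on ℝ^N (g is the discrete twisted functional derivative of K). Then: (a) for all v ∈ V, the Fréchet derivative of K ∘ Π at u satisfies D(K∘Π)[u](v) = B(Ĩ g, Π v); and consequently (b) |D(K∘Π)[u](v) − B(Ĩ g, v)| ≤ ‖id_V − Π‖ · ‖Ĩ g‖ · ‖v‖ for all v ∈ V. In other words, the twisted functional derivative of the projected functional K ∘ Π equals the adjoint of σ applied to the discrete functional derivative, and is approximated by Ĩ g with error controlled by the projection error (the paper's Proposition on discrete functional derivatives). -/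

import Mathlib

private lemma euclid_decomp {n : ℕ} (x : EuclideanSpace ℝ (Fin n)) :
    x = ∑ i, x i • EuclideanSpace.single i 1 := by
  ext j
  have : (∑ i, x i • EuclideanSpace.single (𝕜 := ℝ) i (1:ℝ)) j
      = ∑ i, (x i • EuclideanSpace.single (𝕜 := ℝ) i (1:ℝ)) j :=
    by rw [WithLp.ofLp_sum]; exact Finset.sum_apply j Finset.univ _
  rw [this]
  simp [EuclideanSpace.single_apply]

/-- Discrete functional derivatives. If `K : V → ℝ` is Fréchet
differentiable and `g ∈ ℝ^M` is the discrete twisted functional derivative, i.e. the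
Fréchet derivative of `K ∘ I` at `σ u` is `c ↦ gᵀ M̃ c`, then (a) the Fréchet derivative
of `K ∘ Π` at `u` is `v ↦ B(It g, Π v)`, and (b)
`|D(K∘Π)[u](v) − B(It g, v)| ≤ ‖id_V − Π‖ ‖It g‖ ‖v‖` for all `v`. -/
theorem discrete_functional_derivative
    {W V : Type*} [NormedAddCommGroup W] [NormedSpace ℝ W]
    [NormedAddCommGroup V] [NormedSpace ℝ V]
    (B : W →L[ℝ] V →L[ℝ] ℝ)
    (hB : ∀ (w : W) (v : V), |B w v| ≤ ‖w‖ * ‖v‖)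
    {N M : ℕ}
    (σ : V →L[ℝ] EuclideanSpace ℝ (Fin N))
    (I : EuclideanSpace ℝ (Fin N) →L[ℝ] V)
    (hσI : ∀ c, σ (I c) = c)
    (It : EuclideanSpace ℝ (Fin M) →L[ℝ] W)
    (Mt : Matrix (Fin M) (Fin N) ℝ)
    (hMt : ∀ i j, Mt i j =
      B (It (EuclideanSpace.single i 1)) (I (EuclideanSpace.single j 1)))
    (K : V → ℝ) (hK : Differentiable ℝ K)
    (u : V) (g : EuclideanSpace ℝ (Fin M))
    (hg : ∀ c : EuclideanSpace ℝ (Fin N),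
      fderiv ℝ (fun c' => K (I c')) (σ u) c = ∑ i, g i * ∑ j, Mt i j * c j) :
    (∀ v : V, fderiv ℝ (fun x => K (I (σ x))) u v = B (It g) (I (σ v))) ∧
      (∀ v : V, |fderiv ℝ (fun x => K (I (σ x))) u v - B (It g) v| ≤
        ‖ContinuousLinearMap.id ℝ V - I.comp σ‖ * ‖It g‖ * ‖v‖) := by
  have hKI : Differentiable ℝ (fun c' => K (I c')) :=
    hK.comp I.differentiable
  have hchain : ∀ v : V, fderiv ℝ (fun x => K (I (σ x))) u v
      = fderiv ℝ (fun c' => K (I c')) (σ u) (σ v) := by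
    intro v
    have : fderiv ℝ ((fun c' => K (I c')) ∘ σ) u
        = (fderiv ℝ (fun c' => K (I c')) (σ u)).comp σ := by
      rw [fderiv_comp u (hKI (σ u)) σ.differentiableAt, σ.fderiv]
    have := congrFun (congrArg (fun (f : V →L[ℝ] ℝ) => (f : V → ℝ)) this) v
    exact this
  have hBsum : ∀ x : EuclideanSpace ℝ (Fin N),
      B (It g) (I x) = ∑ i, g i * ∑ j, Mt i j * x j := by
    intro x
    conv_lhs => rw [euclid_decomp g, euclid_decomp x]
    simp only [map_sum, map_smul, ContinuousLinearMap.sum_apply, ContinuousLinearMap.smul_apply,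
      ContinuousLinearMap.coe_sum', Finset.sum_apply, ContinuousLinearMap.coe_smul',
      Pi.smul_apply, smul_eq_mul, Finset.mul_sum]
    rw [Finset.sum_comm]
    refine Finset.sum_congr rfl fun i _ => Finset.sum_congr rfl fun j _ => ?_
    rw [hMt i j]; ring
  have ha : ∀ v : V, fderiv ℝ (fun x => K (I (σ x))) u v = B (It g) (I (σ v)) := by
    intro v
    rw [hchain v, hg (σ v), hBsum (σ v)]
  refine ⟨ha, fun v => ?_⟩
  rw [ha v]
  have h1 : B (It g) (I (σ v)) - B (It g) v
      = -(B (It g) ((ContinuousLinearMap.id ℝ V - I.comp σ) v)) := by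
    simp [map_sub]
  rw [h1, abs_neg]
  calc |B (It g) ((ContinuousLinearMap.id ℝ V - I.comp σ) v)|
      ≤ ‖It g‖ * ‖(ContinuousLinearMap.id ℝ V - I.comp σ) v‖ := hB _ _
    _ ≤ ‖It g‖ * (‖ContinuousLinearMap.id ℝ V - I.comp σ‖ * ‖v‖) := by
        gcongr
        exact (ContinuousLinearMap.id ℝ V - I.comp σ).le_opNorm v
    _ = ‖ContinuousLinearMap.id ℝ V - I.comp σ‖ * ‖It g‖ * ‖v‖ := by ring
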